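/- For the problem with μ = 0 (objective Σ_{j=1}^n w_j·C_j(σ)), there exists an optimal schedule σ* with the property that if the machine idles in the earlier schedule (i.e., σ* has at least one earlier-schedule idle time unit), then Δ_max(σ*) = k. -/

import Mathlib

open Finset

variable (n : ℕ)

/-- Completion time of job `j` in the original WSPT schedule `π*`:
`C_j(π*) = p_1 + ⋯ + p_j`. -/
def Corig (p : Fin n → ℤ) (j : Fin n) : ℤ :=
  ∑ i ∈ Finset.univ.filter (fun i => i ≤ j), p i

/-- Start time of job `j` in the original schedule `π*`. -/
def Sorig (p : Fin n → ℤ) (j : Fin n) : ℤ :=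
  Corig n p j - p j

/-- A feasible schedule: integer start times `σ j ≥ 0`, pairwise disjoint open
processing intervals, and every job either completes by `T1` (earlier schedule)
or starts at or after `T2` (later schedule). -/
def Feasible (p : Fin n → ℤ) (T1 T2 : ℤ) (σ : Fin n → ℤ) : Prop :=
  (∀ j, 0 ≤ σ j) ∧
  (∀ i j, i ≠ j → σ i + p i ≤ σ j ∨ σ j + p j ≤ σ i) ∧
  (∀ j, σ j + p j ≤ T1 ∨ T2 ≤ σ j)

/-- Time deviation of job `j`: `Δ_j(σ) = |C_j(σ) − C_j(π*)|`. -/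
def Dev (p : Fin n → ℤ) (σ : Fin n → ℤ) (j : Fin n) : ℤ :=
  |σ j + p j - Corig n p j|

/-- Maximum time deviation `Δ_max(σ) = max_{1≤j≤n} Δ_j(σ)` (all deviations are
nonnegative, so folding `max` from `0` gives the maximum when `n ≥ 1`). -/
def Dmax (p : Fin n → ℤ) (σ : Fin n → ℤ) : ℤ :=
  Finset.fold max 0 (Dev n p σ) Finset.univ

/-- Admissible: feasible with `Δ_max(σ) ≤ k`. -/
def Admissible (p : Fin n → ℤ) (T1 T2 k : ℤ) (σ : Fin n → ℤ) : Prop :=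
  Feasible n p T1 T2 σ ∧ Dmax n p σ ≤ k

/-- Total weighted completion time `Σ_j w_j · C_j(σ)`. -/
def WObj (p w : Fin n → ℤ) (σ : Fin n → ℤ) : ℤ :=
  ∑ j, w j * (σ j + p j)

/-- The objective `Z(σ) = μ·Δ_max(σ) + Σ_j w_j·C_j(σ)`. -/
def Zval (p w : Fin n → ℤ) (μ : ℚ) (σ : Fin n → ℤ) : ℚ :=
  μ * (Dmax n p σ : ℚ) + (WObj n p w σ : ℚ)

/-- Optimal: admissible and minimizing `Z` over all admissible schedules. -/
def Optimal (p w : Fin n → ℤ) (T1 T2 k : ℤ) (μ : ℚ) (σ : Fin n → ℤ) : Prop :=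
  Admissible n p T1 T2 k σ ∧
  ∀ τ, Admissible n p T1 T2 k τ → Zval n p w μ σ ≤ Zval n p w μ τ

/-- `t ≥ 0` is an earlier-schedule idle time unit of `σ`: no job is processed
during `[t, t+1]` and some earlier-schedule job starts at or after `t+1`. -/
def IdleUnit (p : Fin n → ℤ) (T1 : ℤ) (σ : Fin n → ℤ) (t : ℤ) : Prop :=
  0 ≤ t ∧ (∀ m, ¬(σ m ≤ t ∧ t + 1 ≤ σ m + p m)) ∧
  ∃ j, σ j + p j ≤ T1 ∧ t + 1 ≤ σ j

/-- for `μ = 0` there exists an optimal schedule in which any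
idling in the earlier schedule forces `Δ_max = k`. -/
theorem stmt_11 (n : ℕ) (p w : Fin n → ℤ) (T1 T2 k : ℤ)
    (hn : 0 < n) (hp : ∀ j, 0 < p j) (hw : ∀ j, 0 < w j)
    (hwspt : ∀ i j : Fin n, i ≤ j → p i * w j ≤ p j * w i)
    (hT1 : 0 ≤ T1) (hT12 : T1 < T2) (hk : 0 ≤ k)
    (hadm : ∃ σ, Admissible n p T1 T2 k σ) :
    ∃ σ, (Admissible n p T1 T2 k σ ∧
        ∀ τ, Admissible n p T1 T2 k τ → WObj n p w σ ≤ WObj n p w τ) ∧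
      ((∃ t : ℤ, IdleUnit n p T1 σ t) → Dmax n p σ = k) := by
  classical
  obtain ⟨σ0, hσ0⟩ := hadm
  have hbdd : ∀ σ, Admissible n p T1 T2 k σ → 0 ≤ WObj n p w σ := by
    intro σ hσ
    apply Finset.sum_nonneg
    intro j _
    have h1 := hσ.1.1 j
    have h2 := hp j
    have h3 := hw j
    nlinarith
  obtain ⟨z0, ⟨σ, hσadm, hσz⟩, hmin⟩ :=
    Int.exists_least_of_bdd (P := fun z => ∃ σ, Admissible n p T1 T2 k σ ∧ WObj n p w σ = z)
      ⟨0, by rintro z ⟨σ, hσ, rfl⟩; exact hbdd σ hσ⟩ ⟨WObj n p w σ0, σ0, hσ0, rfl⟩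
  have hopt : ∀ τ, Admissible n p T1 T2 k τ → WObj n p w σ ≤ WObj n p w τ := by
    intro τ hτ
    rw [hσz]; exact hmin _ ⟨τ, hτ, rfl⟩
  have hDmaxle : ∀ ρ : Fin n → ℤ, (Dmax n p ρ ≤ k ↔ ∀ m, Dev n p ρ m ≤ k) := by
    intro ρ
    rw [Dmax, Finset.fold_max_le]
    simp [hk]
  refine ⟨σ, ⟨hσadm, hopt⟩, ?_⟩
  rintro ⟨t, ht0, hno, j0, hj0T, hj0t⟩
  set S := Finset.univ.filter (fun m => σ m + p m ≤ T1 ∧ t + 1 ≤ σ m) with hS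
  have hSne : S.Nonempty := ⟨j0, by simp [hS, hj0T, hj0t]; omega⟩
  obtain ⟨j, hjS, hjmin⟩ := S.exists_min_image σ hSne
  rw [hS, Finset.mem_filter] at hjS
  obtain ⟨-, hjT1, hjt⟩ := hjS
  have hjmin' : ∀ m, σ m + p m ≤ T1 → t + 1 ≤ σ m → σ j ≤ σ m := by
    intro m h1 h2
    exact hjmin m (by simp [hS, h1, h2]; omega)
  set τ := Function.update σ j (σ j - 1) with hτdef
  have hτj : τ j = σ j - 1 := Function.update_self _ _ _
  have hτm : ∀ m, m ≠ j → τ m = σ m := fun m hm => Function.update_of_ne hm _ _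
  obtain ⟨⟨hnn, hdisj, hel⟩, hDσ⟩ := hσadm
  have hfeas : Feasible n p T1 T2 τ := by
    refine ⟨?_, ?_, ?_⟩
    · intro m
      by_cases hm : m = j
      · subst hm; rw [hτj]; omega
      · rw [hτm m hm]; exact hnn m
    · intro a b hab
      by_cases ha : a = j
      · subst ha
        rw [hτj, hτm b (Ne.symm hab)]
        rcases hel b with hb | hb
        · by_cases hbt : t + 1 ≤ σ b
          · have hle := hjmin' b hb hbt
            rcases hdisj a b hab with h | h
            · left; omega
            · exfalso; have := hp b; omega
          · have h1 := hno b
            right; omega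
        · have := hp a; left; omega
      · by_cases hbj : b = j
        · subst hbj
          rw [hτj, hτm a ha]
          rcases hel a with hA | hA
          · by_cases hat : t + 1 ≤ σ a
            · have hle := hjmin' a hA hat
              rcases hdisj b a (Ne.symm hab) with h | h
              · right; omega
              · exfalso; have := hp a; omega
            · have h1 := hno a
              left; omega
          · have := hp b; right; omega
        · rw [hτm a ha, hτm b hbj]; exact hdisj a b hab
    · intro m
      by_cases hm : m = j
      · subst hm; rw [hτj]; left; omega
      · rw [hτm m hm]; exact hel m
  by_cases hτk : Dmax n p τ ≤ k
  · exfalso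
    have hle := hopt τ ⟨hfeas, hτk⟩
    have hsum : WObj n p w σ - WObj n p w τ = w j := by
      unfold WObj
      rw [← Finset.sum_sub_distrib]
      rw [Finset.sum_eq_single j]
      · rw [hτj]; ring
      · intro m _ hm; rw [hτm m hm]; ring
      · simp
    have := hw j
    omega
  · obtain ⟨m, hm⟩ : ∃ m, k < Dev n p τ m := by
      by_contra h
      push_neg at h
      exact hτk ((hDmaxle τ).mpr h)
    have hmj : m = j := by
      by_contra hmj
      have heq : Dev n p τ m = Dev n p σ m := by unfold Dev; rw [hτm m hmj]
      have hle : Dev n p σ m ≤ k := (hDmaxle σ).mp hDσ m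
      omega
    subst hmj
    unfold Dev at hm
    rw [hτj] at hm
    have hdevj : Dev n p σ m ≤ k := (hDmaxle σ).mp hDσ m
    unfold Dev at hdevj
    rw [abs_le] at hdevj
    rw [lt_abs] at hm
    have hx : σ m + p m - Corig n p m = -k := by omega
    have hdevk : Dev n p σ m = k := by
      unfold Dev; rw [hx, abs_neg]; exact abs_of_nonneg hk
    have hkle : k ≤ Dmax n p σ := by
      rw [Dmax, Finset.le_fold_max]
      exact Or.inr ⟨m, Finset.mem_univ m, le_of_eq hdevk.symm⟩
    exact le_antisymm hDσ hkle
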